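/- There exists a constant C > 0 such that the following holds. Let q be a prime power, n ≥ 1, ε ∈ (0,1), r ≥ 1 an integer, d ≥ 0, and {A_g}_{g∈𝔽_q^n} a collection of subsets of 𝔽_q^n with Σ_g |A_g|² ≥ 2^{−d} q^{3n}. Then there exist a subspace V ⊆ 𝔽_q^n of codimension at most C·r(d+1)/ε, shifts {x_g}_{g∈𝔽_q^n} in 𝔽_q^n, and w ∈ 𝔽_q^n such that (1) the collection {(A_g − x_g) ∩ V}_{g ∈ V+w} is (r, 1+ε)-simultaneously spread in V, and (2) Σ_{g∈V+w} |(A_g − x_g) ∩ V|² ≥ 2^{−d} |V|³. -/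
import Mathlib


open scoped BigOperators Classical

noncomputable section

namespace SkewPaper

variable {G : Type*}

/-- Expectation (average) of `f` over a finite type: `E[f] = (1/|G|) ∑ x, f x`. -/
def expect [Fintype G] (f : G → ℝ) : ℝ := (∑ x, f x) / (Fintype.card G)

/-- Normalized inner product `⟨f, g⟩ = E_{x∈G} f(x) g(x)`. -/
def inprod [Fintype G] (f g : G → ℝ) : ℝ := expect (fun x => f x * g x)

/-- Convolution `(f ∗ g)(x) = E_{y∈G} f(y) g(x − y)`. -/
def conv [Fintype G] [AddCommGroup G] (f g : G → ℝ) : G → ℝ :=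
  fun x => expect (fun y => f y * g (x - y))

/-- Difference convolution `(f ∘ g)(x) = E_{y∈G} f(y) g(x + y)`. -/
def dconv [Fintype G] [AddCommGroup G] (f g : G → ℝ) : G → ℝ :=
  fun x => expect (fun y => f y * g (x + y))

/-- Indicator function `1_A` of a set `A`. -/
def ind (A : Set G) : G → ℝ := Set.indicator A (fun _ => (1 : ℝ))

/-- Normalized indicator `μ_A = (|G|/|A|) · 1_A`. -/
def muSet [Fintype G] (A : Set G) : G → ℝ :=
  fun x => ((Fintype.card G : ℝ) / (Nat.card A : ℝ)) * ind A x

/-- `μ_f = f / E[f]`, the normalization of `f` to have mean 1. -/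
def muFun [Fintype G] (f : G → ℝ) : G → ℝ := fun x => f x / expect f

/-- Weighted `L^p` norm `‖f‖_{p(ν)} = (E_x ν(x) |f(x)|^p)^{1/p}`. -/
def wnorm [Fintype G] (p : ℕ) (ν f : G → ℝ) : ℝ :=
  (expect (fun x => ν x * |f x| ^ p)) ^ ((p : ℝ)⁻¹)

/-- `L^p` norm with respect to the uniform measure. -/
def pnorm [Fintype G] (p : ℕ) (f : G → ℝ) : ℝ := wnorm p (fun _ => 1) f

/-- Sup norm `‖f‖_∞`. -/
def supNorm (f : G → ℝ) : ℝ := ⨆ x, |f x|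

/-- `A` is skew-corner-free: it contains no nontrivial skew corner
`(x,y), (x,y+h), (x+h,y')` with `h ≠ 0`. -/
def IsSkewCornerFree [AddCommGroup G] (A : Set (G × G)) : Prop :=
  ∀ x y y' h : G, (x, y) ∈ A → (x, y + h) ∈ A → (x + h, y') ∈ A → h = 0

/-- The set of quadruples `(x, y, y', h)` forming a skew corner of `A`. -/
def skewCorners [AddCommGroup G] (A : Set (G × G)) : Set (G × G × G × G) :=
  {q | (q.1, q.2.1) ∈ A ∧ (q.1, q.2.1 + q.2.2.2) ∈ A ∧ (q.1 + q.2.2.2, q.2.2.1) ∈ A}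

/-- The column `A_x = {y : (x,y) ∈ A}`. -/
def col (A : Set (G × G)) (x : G) : Set G := {y | (x, y) ∈ A}

/-- A Bohr set datum: a finite frequency set of characters together with a width. -/
structure BohrSet (G : Type*) [AddCommGroup G] where
  freq : Finset (AddChar G ℂ)
  width : ℝ

namespace BohrSet

variable [AddCommGroup G]

/-- The underlying set `Bohr(Γ, φ) = {x : |1 − γ(x)| ≤ φ for all γ ∈ Γ}`. -/
def toSet (B : BohrSet G) : Set G :=
  {x | ∀ γ ∈ B.freq, ‖(1 : ℂ) - γ x‖ ≤ B.width}

/-- The rank `|Γ|` of a Bohr set. -/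
def rank (B : BohrSet G) : ℕ := B.freq.card

/-- The dilate `B_ρ = Bohr(Γ, ρφ)`. -/
def dilate (B : BohrSet G) (ρ : ℝ) : BohrSet G := ⟨B.freq, ρ * B.width⟩

/-- `B'` is a sub-Bohr set of `B` (written `B' ≤ B`): its frequency set contains
that of `B` and its width is at most that of `B`. -/
def Sub (B' B : BohrSet G) : Prop := B.freq ⊆ B'.freq ∧ B'.width ≤ B.width

/-- A Bohr set of rank `r` is regular if for all `0 ≤ κ ≤ 1/(100r)`,
`|B_{1+κ}| ≤ (1+100κr)|B|` and `|B_{1−κ}| ≥ (1−100κr)|B|`. -/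
def IsRegular (B : BohrSet G) : Prop :=
  ∀ κ : ℝ, 0 ≤ κ → κ ≤ 1 / (100 * B.rank) →
    ((Nat.card (B.dilate (1 + κ)).toSet : ℝ) ≤ (1 + 100 * κ * B.rank) * (Nat.card B.toSet : ℝ) ∧
     (Nat.card (B.dilate (1 - κ)).toSet : ℝ) ≥ (1 - 100 * κ * B.rank) * (Nat.card B.toSet : ℝ))

/-- The density `μ(B) = |B|/|G|`. -/
def measure [Fintype G] (B : BohrSet G) : ℝ := (Nat.card B.toSet : ℝ) / (Fintype.card G : ℝ)

/-- The normalized indicator measure `μ_B`. -/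
def mu [Fintype G] (B : BohrSet G) : G → ℝ := muSet B.toSet

end BohrSet


/-- (r, λ)-simultaneously spread collection of subsets of 𝔽_q^n. -/
def SimSpread {F : Type*} [Field F] [Fintype F] {n : ℕ} {ι : Type*} [Fintype ι]
    (A : ι → Set (Fin n → F)) (r : ℕ) (lam : ℝ) : Prop :=
  ∀ V : Submodule F (Fin n → F), n ≤ Module.finrank F V + r →
    ∀ x : ι → Fin n → F,
      ∑ i, ((Nat.card ↥(((fun a => a - x i) '' A i) ∩ (V : Set (Fin n → F))) : ℝ) /
            (Nat.card (V : Set (Fin n → F)) : ℝ)) ^ 2 ≤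
        lam * ∑ i, ((Nat.card (A i) : ℝ) / ((Fintype.card F : ℝ) ^ n)) ^ 2

/-- (r, λ)-simultaneously spread in an ambient subspace `W`. -/
def SimSpreadIn {F : Type*} [Field F] [Fintype F] {n : ℕ} {ι : Type*} [Fintype ι]
    (W : Submodule F (Fin n → F)) (A : ι → Set (Fin n → F)) (r : ℕ) (lam : ℝ) : Prop :=
  ∀ V : Submodule F (Fin n → F), V ≤ W → Module.finrank F W ≤ Module.finrank F V + r →
    ∀ x : ι → Fin n → F, (∀ i, x i ∈ W) →
      ∑ i, ((Nat.card ↥(((fun a => a - x i) '' A i) ∩ (V : Set (Fin n → F))) : ℝ) /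
            (Nat.card (V : Set (Fin n → F)) : ℝ)) ^ 2 ≤
        lam * ∑ i, ((Nat.card (A i) : ℝ) / (Nat.card (W : Set (Fin n → F)) : ℝ)) ^ 2

/-- (r, δ, λ)-simultaneously spread collection of subsets of a regular Bohr set `B`. -/
def SimSpreadBohr {G : Type*} [AddCommGroup G] [Fintype G] {ι : Type*} [Fintype ι]
    (B : BohrSet G) (A : ι → Set G) (r : ℕ) (δ lam : ℝ) : Prop :=
  ∀ B' : BohrSet G, B'.Sub B → B'.IsRegular → B'.rank ≤ B.rank + r →
    δ * B.measure ≤ B'.measure →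
    ∀ x : ι → G,
      ∑ i, ((Nat.card ↥(((fun a => a - x i) '' A i) ∩ B'.toSet) : ℝ) /
            (Nat.card B'.toSet : ℝ)) ^ 2 ≤
        lam * ∑ i, ((Nat.card (A i) : ℝ) / (Nat.card B.toSet : ℝ)) ^ 2

section Statement8Proof

set_option linter.unusedSectionVars false

private lemma sum_coe8 {G : Type} [Fintype G] (s : Set G) [Fintype s] (f : G → ℝ) :
    ∑ i : s, f i = ∑ i ∈ s.toFinset, f i := Finset.sum_set_coe (f := f) (s := s)

private lemma card_tf8 {G : Type} [Fintype G] (s : Set G) [Fintype s] :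
    Nat.card s = s.toFinset.card := by
  rw [Nat.card_coe_set_eq, Set.ncard_eq_toFinset_card']

variable {F : Type} [Field F] [Fintype F] {n : ℕ}

private lemma mem_coset_iff8 (V : Submodule F (Fin n → F)) (w g : Fin n → F) :
    g ∈ (fun v => v + w) '' (V : Set (Fin n → F)) ↔ g - w ∈ V := by
  constructor
  · rintro ⟨v, hv, rfl⟩; simpa using hv
  · intro h; exact ⟨g - w, h, by simp⟩

private lemma coset_ncard8 (V : Submodule F (Fin n → F)) (w : Fin n → F) :
    Nat.card ((fun v => v + w) '' (V : Set (Fin n → F))) = Nat.card (V : Set (Fin n → F)) :=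
  Nat.card_image_of_injective (add_left_injective w) _

private lemma card_pos8 (V : Submodule F (Fin n → F)) :
    0 < Nat.card (V : Set (Fin n → F)) := by
  haveI : Nonempty ((V : Set (Fin n → F)) : Type) := ⟨⟨0, V.zero_mem⟩⟩
  exact Nat.card_pos

private lemma shift_inter8 (A : Set (Fin n → F)) (V V₀ : Submodule F (Fin n → F))
    (hle : V₀ ≤ V) (x y : Fin n → F) (hy : y ∈ V) :
    ((fun a => a - y) '' (((fun a => a - x) '' A) ∩ (V : Set (Fin n → F))))
        ∩ (V₀ : Set (Fin n → F))
      = ((fun a => a - (x + y)) '' A) ∩ (V₀ : Set (Fin n → F)) := by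
  ext a
  simp only [Set.mem_inter_iff, Set.mem_image, SetLike.mem_coe]
  constructor
  · rintro ⟨⟨b, ⟨⟨c, hc, rfl⟩, hbV⟩, rfl⟩, ha⟩
    exact ⟨⟨c, hc, by abel⟩, ha⟩
  · rintro ⟨⟨c, hc, rfl⟩, ha⟩
    refine ⟨⟨c - x, ⟨⟨c, hc, rfl⟩, ?_⟩, by abel⟩, ha⟩
    have h1 : c - (x + y) + y ∈ V := V.add_mem (hle ha) hy
    have h2 : c - (x + y) + y = c - x := by abel
    rwa [h2] at h1

private lemma pigeon8 (V V₀ : Submodule F (Fin n → F)) (hle : V₀ ≤ V) (w : Fin n → F)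
    (f : (Fin n → F) → ℝ) :
    ∃ w₁ : Fin n → F,
      (Nat.card (V₀ : Set (Fin n → F)) : ℝ)
          * ∑ g : ((fun v => v + w) '' (V : Set (Fin n → F)) : Set (Fin n → F)), f ↑g ≤
      (Nat.card (V : Set (Fin n → F)) : ℝ)
          * ∑ g : ((fun v => v + w₁) '' (V₀ : Set (Fin n → F)) : Set (Fin n → F)), f ↑g := by
  classical
  have hconv : ∀ (W : Submodule F (Fin n → F)) (u : Fin n → F),
      ∑ g : ((fun v => v + u) '' (W : Set (Fin n → F)) : Set (Fin n → F)), f ↑g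
        = ∑ g ∈ ((fun v => v + u) '' (W : Set (Fin n → F))).toFinset, f g := by
    intro W u; exact sum_coe8 _ f
  rw [hconv V w]
  simp only [hconv V₀]
  set T := ((fun v => v + w) '' (V : Set (Fin n → F))).toFinset with hT
  have hTmem : ∀ g, g ∈ T ↔ g - w ∈ V := by
    intro g; rw [hT, Set.mem_toFinset, mem_coset_iff8]
  have hTne : T.Nonempty := ⟨w, (hTmem w).mpr (by simp [V.zero_mem])⟩
  have hTcard : (T.card : ℝ) = (Nat.card (V : Set (Fin n → F)) : ℝ) := by
    rw [hT, ← card_tf8, coset_ncard8]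
  have hinner : ∀ v ∈ (V₀ : Set (Fin n → F)).toFinset,
      ∑ w₁ ∈ T, f (v + w₁) = ∑ g ∈ T, f g := by
    intro v hv
    have hvV : v ∈ V := hle (by simpa [Set.mem_toFinset] using hv)
    refine Finset.sum_nbij' (fun w₁ => v + w₁) (fun g => g - v) ?_ ?_ ?_ ?_ ?_
    · intro a ha
      rw [hTmem] at ha ⊢
      have he : v + a - w = v + (a - w) := by abel
      rw [he]; exact V.add_mem hvV ha
    · intro a ha
      rw [hTmem] at ha ⊢
      have he : a - v - w = a - w + (-v) := by abel
      rw [he]; exact V.add_mem ha (V.neg_mem hvV)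
    · intro a _; simp
    · intro a _; simp
    · intro a _; rfl
  have key : ∑ w₁ ∈ T, ∑ g ∈ ((fun v => v + w₁) '' (V₀ : Set (Fin n → F))).toFinset, f g
      = (Nat.card (V₀ : Set (Fin n → F)) : ℝ) * ∑ g ∈ T, f g := by
    have h1 : ∀ w₁ ∈ T,
        ∑ g ∈ ((fun v => v + w₁) '' (V₀ : Set (Fin n → F))).toFinset, f g
          = ∑ v ∈ (V₀ : Set (Fin n → F)).toFinset, f (v + w₁) := by
      intro w₁ _
      rw [Set.toFinset_image, Finset.sum_image]
      intro a _ b _ hab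
      exact add_left_injective w₁ hab
    rw [Finset.sum_congr rfl h1, Finset.sum_comm, Finset.sum_congr rfl hinner,
      Finset.sum_const, nsmul_eq_mul, ← card_tf8]
  have havg : ∑ _w₁ ∈ T, ((Nat.card (V₀ : Set (Fin n → F)) : ℝ) * ∑ g ∈ T, f g)
      ≤ ∑ w₁ ∈ T, ((Nat.card (V : Set (Fin n → F)) : ℝ)
          * ∑ g ∈ ((fun v => v + w₁) '' (V₀ : Set (Fin n → F))).toFinset, f g) := by
    refine le_of_eq ?_
    rw [Finset.sum_const, ← Finset.mul_sum, key, nsmul_eq_mul, hTcard]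
  obtain ⟨w₁, _, hw₁⟩ := Finset.exists_le_of_sum_le hTne havg
  exact ⟨w₁, hw₁⟩

private lemma P_le8 (V : Submodule F (Fin n → F)) (w : Fin n → F)
    (A : (Fin n → F) → Set (Fin n → F)) (x : (Fin n → F) → Fin n → F) :
    ∑ g : ((fun v => v + w) '' (V : Set (Fin n → F)) : Set (Fin n → F)),
        (Nat.card ↥(((fun a => a - x ↑g) '' A ↑g) ∩ (V : Set (Fin n → F))) : ℝ) ^ 2
      ≤ (Nat.card (V : Set (Fin n → F)) : ℝ) ^ 3 := by
  have hc := sum_coe8 ((fun v => v + w) '' (V : Set (Fin n → F)))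
    (fun g => (Nat.card ↥(((fun a => a - x g) '' A g) ∩ (V : Set (Fin n → F))) : ℝ) ^ 2)
  refine le_trans (le_of_eq hc) ?_
  have h1 : ∀ g ∈ ((fun v => v + w) '' (V : Set (Fin n → F))).toFinset,
      (Nat.card ↥(((fun a => a - x g) '' A g) ∩ (V : Set (Fin n → F))) : ℝ) ^ 2
        ≤ (Nat.card (V : Set (Fin n → F)) : ℝ) ^ 2 := by
    intro g _
    have hm := Nat.card_mono (Set.toFinite (V : Set (Fin n → F)))
      (Set.inter_subset_right (s := (fun a => a - x g) '' A g)
        (t := (V : Set (Fin n → F))))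
    exact pow_le_pow_left₀ (by positivity) (by exact_mod_cast hm) 2
  calc ∑ g ∈ ((fun v => v + w) '' (V : Set (Fin n → F))).toFinset,
        (Nat.card ↥(((fun a => a - x g) '' A g) ∩ (V : Set (Fin n → F))) : ℝ) ^ 2
      ≤ ((fun v => v + w) '' (V : Set (Fin n → F))).toFinset.card
          • (Nat.card (V : Set (Fin n → F)) : ℝ) ^ 2 := Finset.sum_le_card_nsmul _ _ _ h1
    _ = (Nat.card (V : Set (Fin n → F)) : ℝ) ^ 3 := by
        rw [← card_tf8, coset_ncard8, nsmul_eq_mul]; ring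

private lemma sumdiv8 {ι : Type} [Fintype ι] (c : ι → ℝ) (v : ℝ) :
    ∑ i, (c i / v) ^ 2 = (∑ i, c i ^ 2) / v ^ 2 := by
  rw [Finset.sum_div]
  exact Finset.sum_congr rfl (fun i _ => div_pow _ _ _)

set_option maxHeartbeats 1000000 in
private lemma key8 (ε : ℝ) (hε0 : 0 < ε) (r : ℕ) (d : ℝ) (K : ℕ)
    (hK : (2 : ℝ) ^ d < (1 + ε) ^ K)
    (A : (Fin n → F) → Set (Fin n → F)) :
    ∀ j m : ℕ, m + j = K →
    ∀ (V : Submodule F (Fin n → F)) (x : (Fin n → F) → Fin n → F) (w : Fin n → F),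
      (2 : ℝ) ^ (-d) * (1 + ε) ^ m * (Nat.card (V : Set (Fin n → F)) : ℝ) ^ 3 ≤
        ∑ g : ↥((fun v => v + w) '' (V : Set (Fin n → F))),
          (Nat.card ↥(((fun a => a - x ↑g) '' A ↑g) ∩ (V : Set (Fin n → F))) : ℝ) ^ 2 →
      (n : ℝ) - (Module.finrank F V : ℝ) ≤ r * m →
      ∃ (V₁ : Submodule F (Fin n → F)) (x₁ : (Fin n → F) → Fin n → F) (w₁ : Fin n → F),
        (n : ℝ) - (Module.finrank F V₁ : ℝ) ≤ r * K ∧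
        SimSpreadIn V₁
          (fun g : ↥((fun v => v + w₁) '' (V₁ : Set (Fin n → F))) =>
            ((fun a => a - x₁ ↑g) '' A ↑g) ∩ (V₁ : Set (Fin n → F))) r (1 + ε) ∧
        (2 : ℝ) ^ (-d) * (Nat.card (V₁ : Set (Fin n → F)) : ℝ) ^ 3 ≤
          ∑ g : ↥((fun v => v + w₁) '' (V₁ : Set (Fin n → F))),
            (Nat.card ↥(((fun a => a - x₁ ↑g) '' A ↑g) ∩ (V₁ : Set (Fin n → F))) : ℝ) ^ 2 := by
  have h2d : (0 : ℝ) < (2 : ℝ) ^ d := Real.rpow_pos_of_pos (by norm_num) d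
  have h2nd : (0 : ℝ) < (2 : ℝ) ^ (-d) := Real.rpow_pos_of_pos (by norm_num) (-d)
  have h2dd : (2 : ℝ) ^ (-d) * (2 : ℝ) ^ d = 1 := by
    rw [← Real.rpow_add (by norm_num)]; simp
  intro j
  induction j with
  | zero =>
    intro m hm V x w hP _
    exfalso
    have hmK : m = K := by omega
    rw [← hmK] at hK
    have hub := P_le8 V w A x
    have hv3 : (0 : ℝ) < (Nat.card (V : Set (Fin n → F)) : ℝ) ^ 3 := by
      have := card_pos8 V
      positivity
    have h1 : (1 : ℝ) < (2 : ℝ) ^ (-d) * (1 + ε) ^ m := by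
      have h2 := mul_lt_mul_of_pos_left hK h2nd
      nlinarith
    nlinarith
  | succ j ih =>
    intro m hm V x w hP hcod
    by_cases hs : SimSpreadIn V
        (fun g : ↥((fun v => v + w) '' (V : Set (Fin n → F))) =>
          ((fun a => a - x ↑g) '' A ↑g) ∩ (V : Set (Fin n → F))) r (1 + ε)
    · refine ⟨V, x, w, ?_, hs, ?_⟩
      · have hmle : (m : ℝ) ≤ (K : ℝ) := by
          have : m ≤ K := by omega
          exact_mod_cast this
        have hr0 : (0 : ℝ) ≤ (r : ℝ) := Nat.cast_nonneg r
        calc (n : ℝ) - (Module.finrank F V : ℝ) ≤ r * m := hcod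
          _ ≤ r * K := mul_le_mul_of_nonneg_left hmle hr0
      · refine le_trans ?_ hP
        have h1 : (1 : ℝ) ≤ (1 + ε) ^ m := one_le_pow₀ (by linarith)
        have hv3 : (0 : ℝ) ≤ (Nat.card (V : Set (Fin n → F)) : ℝ) ^ 3 := by positivity
        have h2 := mul_le_mul_of_nonneg_right
          (mul_le_mul_of_nonneg_left h1 h2nd.le) hv3
        rw [mul_one] at h2
        linarith
    · simp only [SimSpreadIn, not_forall, not_le] at hs
      obtain ⟨V₀, hle, hrk, y, hy, hlt⟩ := hs
      set x₁ : (Fin n → F) → Fin n → F := fun g =>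
        if h : g ∈ (fun v => v + w) '' (V : Set (Fin n → F)) then x g + y ⟨g, h⟩ else 0
        with hx₁
      have hterm : ∀ i : ((fun v => v + w) '' (V : Set (Fin n → F)) : Set (Fin n → F)),
          ((fun a => a - y i) ''
              (((fun a => a - x ↑i) '' A ↑i) ∩ (V : Set (Fin n → F))))
            ∩ (V₀ : Set (Fin n → F))
          = ((fun a => a - x₁ ↑i) '' A ↑i) ∩ (V₀ : Set (Fin n → F)) := by
        intro i
        have hx₁eq : x₁ ↑i = x ↑i + y i := by
          rw [hx₁]
          simp only [dif_pos i.2]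
        rw [hx₁eq]
        exact shift_inter8 (A ↑i) V V₀ hle (x ↑i) (y i) (hy i)
      have hvVpos : (0:ℝ) < (Nat.card (V : Set (Fin n → F)) : ℝ) := by
        exact_mod_cast card_pos8 V
      have hvV₀pos : (0:ℝ) < (Nat.card (V₀ : Set (Fin n → F)) : ℝ) := by
        exact_mod_cast card_pos8 V₀
      have eA := sumdiv8 (fun i : ↥((fun v => v + w) '' (V : Set (Fin n → F))) =>
        (Nat.card ↥(((fun a => a - x ↑i) '' A ↑i) ∩ (V : Set (Fin n → F))) : ℝ))
        (Nat.card (V : Set (Fin n → F)) : ℝ)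
      have eB := sumdiv8 (fun i : ↥((fun v => v + w) '' (V : Set (Fin n → F))) =>
        (Nat.card ↥(((fun a => a - y i) ''
            (((fun a => a - x ↑i) '' A ↑i) ∩ (V : Set (Fin n → F))))
          ∩ (V₀ : Set (Fin n → F))) : ℝ))
        (Nat.card (V₀ : Set (Fin n → F)) : ℝ)
      rw [eA, eB] at hlt
      have eC : (∑ i : ↥((fun v => v + w) '' (V : Set (Fin n → F))),
          (Nat.card ↥(((fun a => a - y i) ''
              (((fun a => a - x ↑i) '' A ↑i) ∩ (V : Set (Fin n → F))))
            ∩ (V₀ : Set (Fin n → F))) : ℝ) ^ 2)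
          = ∑ i : ↥((fun v => v + w) '' (V : Set (Fin n → F))),
          (Nat.card ↥(((fun a => a - x₁ ↑i) '' A ↑i) ∩ (V₀ : Set (Fin n → F))) : ℝ) ^ 2 :=
        Finset.sum_congr rfl (fun i _ => by rw [hterm i])
      rw [eC] at hlt
      -- now hlt : (1+ε) * (Sa / vV^2) < Sf / vV₀^2
      have htot : (2 : ℝ) ^ (-d) * (1 + ε) ^ (m + 1)
            * ((Nat.card (V₀ : Set (Fin n → F)) : ℝ) ^ 2 * (Nat.card (V : Set (Fin n → F)) : ℝ))
          < ∑ i : ↥((fun v => v + w) '' (V : Set (Fin n → F))),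
            (Nat.card ↥(((fun a => a - x₁ ↑i) '' A ↑i) ∩ (V₀ : Set (Fin n → F))) : ℝ) ^ 2 := by
        have h2 : (1 + ε) * (((2 : ℝ) ^ (-d) * (1 + ε) ^ m
              * (Nat.card (V : Set (Fin n → F)) : ℝ) ^ 3)
                / (Nat.card (V : Set (Fin n → F)) : ℝ) ^ 2)
            ≤ (1 + ε) * ((∑ g : ↥((fun v => v + w) '' (V : Set (Fin n → F))),
              (Nat.card ↥(((fun a => a - x ↑g) '' A ↑g) ∩ (V : Set (Fin n → F))) : ℝ) ^ 2)
                / (Nat.card (V : Set (Fin n → F)) : ℝ) ^ 2) :=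
          mul_le_mul_of_nonneg_left
            (div_le_div_of_nonneg_right hP (by positivity)) (by linarith)
        have h3 : (1 + ε) * (((2 : ℝ) ^ (-d) * (1 + ε) ^ m
              * (Nat.card (V : Set (Fin n → F)) : ℝ) ^ 3)
                / (Nat.card (V : Set (Fin n → F)) : ℝ) ^ 2)
            = (2 : ℝ) ^ (-d) * (1 + ε) ^ (m + 1) * (Nat.card (V : Set (Fin n → F)) : ℝ) := by
          field_simp
          ring
        have h4 := (h3 ▸ h2).trans_lt hlt
        have h5 := (lt_div_iff₀ (by positivity :
          (0:ℝ) < (Nat.card (V₀ : Set (Fin n → F)) : ℝ) ^ 2)).mp h4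
        nlinarith
      obtain ⟨w₁, hpig⟩ := pigeon8 V V₀ hle w
        (fun g => (Nat.card ↥(((fun a => a - x₁ g) '' A g) ∩ (V₀ : Set (Fin n → F))) : ℝ) ^ 2)
      have hP₁ : (2 : ℝ) ^ (-d) * (1 + ε) ^ (m + 1)
            * (Nat.card (V₀ : Set (Fin n → F)) : ℝ) ^ 3 ≤
          ∑ g : ↥((fun v => v + w₁) '' (V₀ : Set (Fin n → F))),
            (Nat.card ↥(((fun a => a - x₁ ↑g) '' A ↑g) ∩ (V₀ : Set (Fin n → F))) : ℝ) ^ 2 := by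
        nlinarith [mul_lt_mul_of_pos_left htot hvV₀pos]
      have hcod₁ : (n : ℝ) - (Module.finrank F V₀ : ℝ) ≤ r * ((m : ℝ) + 1) := by
        have hc : (Module.finrank F V : ℝ) ≤ (Module.finrank F V₀ : ℝ) + r := by
          exact_mod_cast hrk
        linarith
      have hcod₁' : (n : ℝ) - (Module.finrank F V₀ : ℝ) ≤ r * ((m + 1 : ℕ) : ℝ) := by
        push_cast
        exact hcod₁
      exact ih (m + 1) (by omega) V₀ x₁ w₁ hP₁ hcod₁'

end Statement8Proof
set_option maxHeartbeats 1000000 in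
theorem statement8 :
    ∃ C : ℝ, 0 < C ∧ ∀ (F : Type) [Field F] [Fintype F], ∀ n : ℕ, 1 ≤ n →
      ∀ ε : ℝ, 0 < ε → ε < 1 → ∀ r : ℕ, 1 ≤ r → ∀ d : ℝ, 0 ≤ d →
      ∀ A : (Fin n → F) → Set (Fin n → F),
        (2 : ℝ) ^ (-d) * (Fintype.card F : ℝ) ^ (3 * n) ≤ ∑ g, (Nat.card (A g) : ℝ) ^ 2 →
        ∃ (V : Submodule F (Fin n → F)) (x : (Fin n → F) → Fin n → F) (w : Fin n → F),
          (n : ℝ) - (Module.finrank F V : ℝ) ≤ C * r * (d + 1) / ε ∧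
          SimSpreadIn V
            (fun g : ↥((fun v => v + w) '' (V : Set (Fin n → F))) =>
              ((fun a => a - x ↑g) '' A ↑g) ∩ (V : Set (Fin n → F))) r (1 + ε) ∧
          (2 : ℝ) ^ (-d) * (Nat.card (V : Set (Fin n → F)) : ℝ) ^ 3 ≤
            ∑ g : ↥((fun v => v + w) '' (V : Set (Fin n → F))),
              (Nat.card ↥(((fun a => a - x ↑g) '' A ↑g) ∩ (V : Set (Fin n → F))) : ℝ) ^ 2 := by
  refine ⟨4, by norm_num, ?_⟩
  intro F _ _ n hn ε hε0 hε1 r hr d hd A hA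
  classical
  set K : ℕ := (⌈d⌉₊ + 1) * ⌈1/ε⌉₊ with hKdef
  have hεK : (2:ℝ) ≤ (1+ε) ^ ⌈1/ε⌉₊ := by
    have hb := one_add_mul_le_pow (by linarith : (-2:ℝ) ≤ ε) ⌈1/ε⌉₊
    have hce : (1:ℝ) ≤ (⌈1/ε⌉₊ : ℝ) * ε := by
      have h1 : (1/ε : ℝ) ≤ (⌈1/ε⌉₊ : ℝ) := Nat.le_ceil _
      calc (1:ℝ) = (1/ε) * ε := by field_simp
        _ ≤ (⌈1/ε⌉₊ : ℝ) * ε := mul_le_mul_of_nonneg_right h1 hε0.le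
    linarith
  have hK : (2:ℝ)^d < (1+ε)^K := by
    have h1 : (2:ℝ)^d < (2:ℝ)^(((⌈d⌉₊ + 1 : ℕ) : ℝ)) := by
      refine (Real.rpow_lt_rpow_left_iff (by norm_num : (1:ℝ) < 2)).mpr ?_
      have := Nat.le_ceil d
      push_cast
      linarith
    have h2 : (2:ℝ)^(((⌈d⌉₊ + 1 : ℕ) : ℝ)) = (2:ℝ)^(⌈d⌉₊ + 1 : ℕ) :=
      Real.rpow_natCast 2 (⌈d⌉₊ + 1)
    have h3 : ((2:ℝ))^(⌈d⌉₊ + 1 : ℕ) ≤ ((1+ε)^⌈1/ε⌉₊)^(⌈d⌉₊ + 1 : ℕ) :=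
      pow_le_pow_left₀ (by norm_num) hεK _
    have h4 : ((1+ε)^⌈1/ε⌉₊)^(⌈d⌉₊ + 1 : ℕ) = (1+ε)^K := by
      rw [← pow_mul, hKdef, Nat.mul_comm]
    calc (2:ℝ)^d < (2:ℝ)^(((⌈d⌉₊ + 1 : ℕ) : ℝ)) := h1
      _ = (2:ℝ)^(⌈d⌉₊ + 1 : ℕ) := h2
      _ ≤ ((1+ε)^⌈1/ε⌉₊)^(⌈d⌉₊ + 1 : ℕ) := h3
      _ = (1+ε)^K := h4
  have hcard : Nat.card ((⊤ : Submodule F (Fin n → F)) : Set (Fin n → F))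
      = Fintype.card F ^ n := by
    rw [Submodule.top_coe, Nat.card_coe_set_eq, Set.ncard_univ, Nat.card_eq_fintype_card]
    simp
  have hset : ((fun v => v + (0 : Fin n → F)) ''
      ((⊤ : Submodule F (Fin n → F)) : Set (Fin n → F))) = Set.univ := by
    simp
  have hterm : ∀ g : Fin n → F,
      ((fun a => a - (0 : Fin n → F)) '' A g)
        ∩ ((⊤ : Submodule F (Fin n → F)) : Set (Fin n → F)) = A g := by
    intro g
    simp
  have hbij : Function.Bijective
      (Subtype.val : ↥((fun v => v + (0 : Fin n → F)) ''
        ((⊤ : Submodule F (Fin n → F)) : Set (Fin n → F))) → (Fin n → F)) := by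
    constructor
    · exact Subtype.val_injective
    · intro g
      refine ⟨⟨g, ?_⟩, rfl⟩
      rw [hset]
      trivial
  have hsum : ∑ g : ↥((fun v => v + (0 : Fin n → F)) ''
        ((⊤ : Submodule F (Fin n → F)) : Set (Fin n → F))),
        (Nat.card ↥(((fun a => a - (0 : Fin n → F)) '' A ↑g)
          ∩ ((⊤ : Submodule F (Fin n → F)) : Set (Fin n → F))) : ℝ) ^ 2
      = ∑ g : Fin n → F, (Nat.card (A g) : ℝ) ^ 2 := by
    refine Fintype.sum_bijective Subtype.val hbij _ _ (fun i => ?_)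
    rw [hterm ↑i]
  have hinit : (2 : ℝ) ^ (-d) * (1 + ε) ^ (0:ℕ)
        * (Nat.card ((⊤ : Submodule F (Fin n → F)) : Set (Fin n → F)) : ℝ) ^ 3 ≤
      ∑ g : ↥((fun v => v + (0 : Fin n → F)) ''
          ((⊤ : Submodule F (Fin n → F)) : Set (Fin n → F))),
        (Nat.card ↥(((fun a => a - (0 : Fin n → F)) '' A ↑g)
          ∩ ((⊤ : Submodule F (Fin n → F)) : Set (Fin n → F))) : ℝ) ^ 2 := by
    rw [hsum, pow_zero, mul_one, hcard]
    calc (2 : ℝ) ^ (-d) * ((Fintype.card F ^ n : ℕ) : ℝ) ^ 3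
        = (2 : ℝ) ^ (-d) * (Fintype.card F : ℝ) ^ (3 * n) := by
          push_cast
          rw [← pow_mul, Nat.mul_comm]
      _ ≤ ∑ g : Fin n → F, (Nat.card (A g) : ℝ) ^ 2 := hA
  have hcod0 : (n : ℝ) - (Module.finrank F (⊤ : Submodule F (Fin n → F)) : ℝ)
      ≤ r * ((0:ℕ) : ℝ) := by
    have htop : Module.finrank F (⊤ : Submodule F (Fin n → F)) = n := by
      rw [finrank_top, Module.finrank_fin_fun]
    rw [htop]
    simp
  obtain ⟨V₁, x₁, w₁, hc, hsp, hlow⟩ :=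
    key8 ε hε0 r d K hK A K 0 (by omega) ⊤ (fun _ => (0 : Fin n → F)) 0 hinit hcod0
  refine ⟨V₁, x₁, w₁, ?_, hsp, hlow⟩
  have h1ε : (1:ℝ) ≤ 1/ε := one_le_one_div hε0 hε1.le
  have hKb : (K:ℝ) ≤ 4*(d+1)/ε := by
    have h1 : ((⌈d⌉₊ : ℕ) : ℝ) ≤ d + 1 := (Nat.ceil_lt_add_one hd).le
    have h2 : ((⌈1/ε⌉₊ : ℕ) : ℝ) ≤ 2/ε := by
      have h3 : ((⌈1/ε⌉₊ : ℕ) : ℝ) < 1/ε + 1 := Nat.ceil_lt_add_one (by positivity)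
      have h4 : (1/ε : ℝ) + 1 ≤ 2/ε := by
        have : (2:ℝ)/ε = 1/ε + 1/ε := by ring
        linarith
      linarith
    calc (K:ℝ) = (((⌈d⌉₊ : ℕ) : ℝ) + 1) * ((⌈1/ε⌉₊ : ℕ) : ℝ) := by
          rw [hKdef]; push_cast; ring
      _ ≤ (d + 2) * (2/ε) := by
          refine mul_le_mul (by linarith) h2 (by positivity) (by linarith)
      _ = (2*d + 4)/ε := by ring
      _ ≤ (4*(d+1))/ε := by
          refine (div_le_div_iff_of_pos_right hε0).mpr ?_
          linarith
      _ = 4*(d+1)/ε := by ring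
  calc (n : ℝ) - (Module.finrank F V₁ : ℝ) ≤ r * K := hc
    _ ≤ r * (4*(d+1)/ε) := mul_le_mul_of_nonneg_left hKb (Nat.cast_nonneg r)
    _ = 4 * r * (d+1) / ε := by ring


end SkewPaper
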